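/- Let L' ⊆ ℂ[t,t⁻¹] be the space of Laurent polynomials with zero constant term. Let 𝔤 ⊆ End(L' ⊕ ℂ) be the ℂ-linear span of the operators A_{f,g} : (k,c) ↦ (T_{f,g}(k), 0) for f,g ∈ L', together with the operators B_h : (k,c) ↦ (c·h, 0) for h ∈ L', where T_{f,g}(k) = ⟨f,k⟩·g + ⟨g,k⟩·f. Then 𝔤 is closed under the commutator bracket and is perfect: [𝔤, 𝔤] = 𝔤. (This realizes the identity S²(H'_f) ⋉ H'_f = [S²(H'_f) ⋉ H'_f, S²(H'_f) ⋉ H'_f] used to prove H¹(sp(H') ⋉ H', ℂ) = 0.) -/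

import Mathlib

open HahnSeries

/-- Formal derivative on Laurent series: `(D f).coeff n = (n+1) * f.coeff (n+1)`. -/
noncomputable def D (f : LaurentSeries ℂ) : LaurentSeries ℂ where
  coeff := fun n => ((n + 1 : ℤ) : ℂ) * f.coeff (n + 1)
  isPWO_support' := by
    have himg : (Function.support fun n : ℤ => ((n + 1 : ℤ) : ℂ) * f.coeff (n + 1)) ⊆
        (fun n : ℤ => n - 1) '' f.support := by
      intro n hn
      have h : f.coeff (n + 1) ≠ 0 := by
        intro h
        simp [Function.mem_support, h] at hn
      exact ⟨n + 1, h, by ring⟩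
    exact (f.isPWO_support.image_of_monotone
      (fun a b hab => by simpa using sub_le_sub_right hab 1)).mono himg

/-- The residue pairing `⟨f,g⟩ = -Res_{t=0}(f·g')`, i.e. minus the coefficient of
`t⁻¹` in `f * D g`. -/
noncomputable def resPair (f g : LaurentSeries ℂ) : ℂ := -((f * D g).coeff (-1))

/-- `L' ⊂ ℂ((t))`: Laurent polynomials with zero constant term, viewed inside the
Laurent series. -/
noncomputable def Lprime : Submodule ℂ (LaurentSeries ℂ) where
  carrier := {f | f.coeff 0 = 0 ∧ f.support.Finite}
  zero_mem' := by
    refine ⟨by simp, ?_⟩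
    simp [HahnSeries.support_zero]
  add_mem' := by
    rintro a b ⟨ha0, haf⟩ ⟨hb0, hbf⟩
    refine ⟨by simp [HahnSeries.coeff_add, ha0, hb0], ?_⟩
    refine Set.Finite.subset (haf.union hbf) ?_
    intro n hn
    simp only [HahnSeries.support, Function.mem_support, HahnSeries.coeff_add,
      Set.mem_union] at hn ⊢
    by_contra h
    push_neg at h
    simp [h.1, h.2] at hn
  smul_mem' := by
    rintro c f ⟨hf0, hff⟩
    refine ⟨by simp [HahnSeries.coeff_smul, hf0], ?_⟩
    refine Set.Finite.subset hff ?_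
    intro n hn
    simp only [HahnSeries.support, Function.mem_support, HahnSeries.coeff_smul] at hn ⊢
    intro h
    simp [h] at hn

/-- The operator `T_{f,g} : L' → L'`, `T_{f,g}(k) = ⟨f,k⟩g + ⟨g,k⟩f`. -/
noncomputable def TL (f g : Lprime) (k : Lprime) : Lprime :=
  resPair (f : LaurentSeries ℂ) (k : LaurentSeries ℂ) • g +
    resPair (g : LaurentSeries ℂ) (k : LaurentSeries ℂ) • f

/-- The operator `A_{f,g} : (k,c) ↦ (T_{f,g}(k), 0)` on `L' ⊕ ℂ`. -/
noncomputable def ALg (f g : Lprime) : Lprime × ℂ → Lprime × ℂ :=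
  fun x => (TL f g x.1, 0)

/-- The operator `B_h : (k,c) ↦ (c·h, 0)` on `L' ⊕ ℂ`. -/
noncomputable def BLg (h : Lprime) : Lprime × ℂ → Lprime × ℂ :=
  fun x => (x.2 • h, 0)

/-- The span `𝔤 ≅ S²(H'_f) ⋉ H'_f` of the operators `A_{f,g}` and `B_h` inside
`End(L' ⊕ ℂ)`. -/
noncomputable def gFrak : Submodule ℂ (Lprime × ℂ → Lprime × ℂ) :=
  Submodule.span ℂ
    ({A | ∃ f g : Lprime, A = ALg f g} ∪ {A | ∃ h : Lprime, A = BLg h})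


set_option maxHeartbeats 1000000
set_option synthInstance.maxHeartbeats 1000000

/-! ### Auxiliary lemmas -/

section Aux

open HahnSeries Finset

lemma D_coeff (f : LaurentSeries ℂ) (n : ℤ) :
    (D f).coeff n = ((n + 1 : ℤ) : ℂ) * f.coeff (n + 1) := rfl

lemma D_add (f g : LaurentSeries ℂ) : D (f + g) = D f + D g := by
  apply HahnSeries.coeff_injective
  funext n
  simp [D_coeff, HahnSeries.coeff_add, mul_add]

lemma D_smul (c : ℂ) (f : LaurentSeries ℂ) : D (c • f) = c • D f := by
  apply HahnSeries.coeff_injective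
  funext n
  simp [D_coeff, HahnSeries.coeff_smul]
  ring

lemma D_zero : D (0 : LaurentSeries ℂ) = 0 := by
  apply HahnSeries.coeff_injective
  funext n
  simp [D_coeff]

lemma hs_mul_smul (c : ℂ) (f g : HahnSeries ℤ ℂ) : f * (c • g) = c • (f * g) := by
  have hsub : (c • g).support ⊆ g.support := by
    intro a ha
    simp only [HahnSeries.mem_support, HahnSeries.coeff_smul] at ha ⊢
    exact fun h => ha (by simp [h])
  apply HahnSeries.coeff_injective
  funext a
  rw [HahnSeries.coeff_smul, coeff_mul_right' g.isPWO_support hsub,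
    HahnSeries.coeff_mul, Finset.smul_sum]
  exact Finset.sum_congr rfl fun ij _ => by
    rw [HahnSeries.coeff_smul]; simp only [smul_eq_mul]; ring

lemma hs_smul_mul (c : ℂ) (f g : HahnSeries ℤ ℂ) : (c • f) * g = c • (f * g) := by
  have hsub : (c • f).support ⊆ f.support := by
    intro a ha
    simp only [HahnSeries.mem_support, HahnSeries.coeff_smul] at ha ⊢
    exact fun h => ha (by simp [h])
  apply HahnSeries.coeff_injective
  funext a
  rw [HahnSeries.coeff_smul, coeff_mul_left' f.isPWO_support hsub,
    HahnSeries.coeff_mul, Finset.smul_sum]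
  exact Finset.sum_congr rfl fun ij _ => by
    rw [HahnSeries.coeff_smul]; simp only [smul_eq_mul]; ring

lemma resPair_add_right (f g h : LaurentSeries ℂ) :
    resPair f (g + h) = resPair f g + resPair f h := by
  simp [resPair, D_add, mul_add, HahnSeries.coeff_add]
  ring

lemma resPair_smul_right (f : LaurentSeries ℂ) (c : ℂ) (g : LaurentSeries ℂ) :
    resPair f (c • g) = c * resPair f g := by
  rw [resPair, resPair, D_smul, hs_mul_smul]
  simp [HahnSeries.coeff_smul]

lemma resPair_zero_right (f : LaurentSeries ℂ) : resPair f 0 = 0 := by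
  simp [resPair, D_zero]

lemma resPair_antisymm (f g : LaurentSeries ℂ)
    (hf : f.coeff 0 = 0) (hg : g.coeff 0 = 0) :
    resPair f g = - resPair g f := by
  have key : (f * D g).coeff (-1) = -((g * D f).coeff (-1)) := by
    rw [HahnSeries.coeff_mul, HahnSeries.coeff_mul, ← Finset.sum_neg_distrib]
    refine Finset.sum_nbij' (fun p => (p.2 + 1, p.1 - 1)) (fun p => (p.2 + 1, p.1 - 1))
      ?_ ?_ ?_ ?_ ?_
    · rintro ⟨i, j⟩ hij
      rw [Finset.mem_addAntidiagonal] at hij ⊢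
      obtain ⟨hi, hj, hsum⟩ := hij
      simp only [HahnSeries.mem_support] at hi hj ⊢
      rw [D_coeff] at hj
      have hgj : g.coeff (j + 1) ≠ 0 := fun h => hj (by simp [h])
      have hi0 : i ≠ 0 := fun h => hi (by simp [h, hf])
      refine ⟨hgj, ?_, by simp only at hsum ⊢; omega⟩
      rw [D_coeff]
      have h2 : i - 1 + 1 = i := by ring
      rw [h2]
      intro h
      rcases mul_eq_zero.mp h with h | h
      · exact hi0 (by exact_mod_cast h)
      · exact hi h
    · rintro ⟨i, j⟩ hij
      rw [Finset.mem_addAntidiagonal] at hij ⊢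
      obtain ⟨hi, hj, hsum⟩ := hij
      simp only [HahnSeries.mem_support] at hi hj ⊢
      rw [D_coeff] at hj
      have hfj : f.coeff (j + 1) ≠ 0 := fun h => hj (by simp [h])
      have hi0 : i ≠ 0 := fun h => hi (by simp [h, hg])
      refine ⟨hfj, ?_, by simp only at hsum ⊢; omega⟩
      rw [D_coeff]
      have h2 : i - 1 + 1 = i := by ring
      rw [h2]
      intro h
      rcases mul_eq_zero.mp h with h | h
      · exact hi0 (by exact_mod_cast h)
      · exact hi h
    · rintro ⟨i, j⟩ _; simp
    · rintro ⟨i, j⟩ _; simp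
    · rintro ⟨i, j⟩ hij
      rw [Finset.mem_addAntidiagonal] at hij
      obtain ⟨hi, hj, hsum⟩ := hij
      simp only at hsum
      dsimp only
      rw [D_coeff, D_coeff]
      have h2 : i - 1 + 1 = i := by ring
      have h3 : (j : ℤ) + 1 = -i := by omega
      rw [h2, h3]
      push_cast
      ring
  rw [resPair, resPair, key]

/-- `t` as an element of `L'`. -/
noncomputable def tp : Lprime :=
  ⟨HahnSeries.single (1 : ℤ) (1 : ℂ), by
    constructor
    · exact HahnSeries.coeff_single_of_ne (by norm_num)
    · exact Set.Finite.subset (Set.finite_singleton 1) HahnSeries.support_single_subset⟩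

/-- `t⁻¹` as an element of `L'`. -/
noncomputable def tm : Lprime :=
  ⟨HahnSeries.single (-1 : ℤ) (1 : ℂ), by
    constructor
    · exact HahnSeries.coeff_single_of_ne (by norm_num)
    · exact Set.Finite.subset (Set.finite_singleton (-1)) HahnSeries.support_single_subset⟩

lemma D_single (a : ℤ) (r : ℂ) :
    D (HahnSeries.single a r) = HahnSeries.single (a - 1) ((a : ℂ) * r) := by
  apply HahnSeries.coeff_injective
  funext n
  rw [D_coeff]
  by_cases h : n = a - 1
  · subst h
    have h1 : a - 1 + 1 = a := by ring
    rw [h1, HahnSeries.coeff_single_same, HahnSeries.coeff_single_same]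
  · rw [HahnSeries.coeff_single_of_ne h, HahnSeries.coeff_single_of_ne (by omega : n + 1 ≠ a)]
    ring

lemma D_tp : D (tp : LaurentSeries ℂ) = 1 := by
  show D (HahnSeries.single (1 : ℤ) (1 : ℂ)) = 1
  rw [D_single, ← HahnSeries.single_zero_one]
  norm_num

lemma D_tm : D (tm : LaurentSeries ℂ) = HahnSeries.single (-2 : ℤ) (-1 : ℂ) := by
  show D (HahnSeries.single (-1 : ℤ) (1 : ℂ)) = HahnSeries.single (-2 : ℤ) (-1 : ℂ)
  rw [D_single]
  norm_num

lemma resPair_tp (f : LaurentSeries ℂ) : resPair f (tp : LaurentSeries ℂ) = -(f.coeff (-1)) := by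
  rw [resPair, D_tp, mul_one]

lemma resPair_tm (f : LaurentSeries ℂ) : resPair f (tm : LaurentSeries ℂ) = f.coeff 1 := by
  rw [resPair, D_tm]
  have : (-1 : ℤ) = 1 + (-2) := by norm_num
  rw [this, HahnSeries.coeff_mul_single_add]
  ring

lemma v_tmtp : resPair (tm : LaurentSeries ℂ) (tp : LaurentSeries ℂ) = -1 := by
  rw [resPair_tp]
  simp [tm, HahnSeries.coeff_single_same]

lemma v_tptm : resPair (tp : LaurentSeries ℂ) (tm : LaurentSeries ℂ) = 1 := by
  rw [resPair_tm]
  simp [tp, HahnSeries.coeff_single_same]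

lemma v_tptp : resPair (tp : LaurentSeries ℂ) (tp : LaurentSeries ℂ) = 0 := by
  rw [resPair_tp]
  simp [tp, HahnSeries.coeff_single_of_ne (by norm_num : (-1 : ℤ) ≠ 1)]

lemma v_tmtm : resPair (tm : LaurentSeries ℂ) (tm : LaurentSeries ℂ) = 0 := by
  rw [resPair_tm]
  simp [tm, HahnSeries.coeff_single_of_ne (by norm_num : (1 : ℤ) ≠ -1)]

/-- antisymmetry on `L'`. -/
lemma resPair_antisymmL (f g : Lprime) :
    resPair (g : LaurentSeries ℂ) (f : LaurentSeries ℂ)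
      = - resPair (f : LaurentSeries ℂ) (g : LaurentSeries ℂ) := by
  rw [resPair_antisymm _ _ g.2.1 f.2.1]

lemma TL_coe (f g k : Lprime) :
    ((TL f g k : Lprime) : LaurentSeries ℂ)
      = resPair (f : LaurentSeries ℂ) (k : LaurentSeries ℂ) • (g : LaurentSeries ℂ)
        + resPair (g : LaurentSeries ℂ) (k : LaurentSeries ℂ) • (f : LaurentSeries ℂ) := rfl

lemma resPair_TL (a c d k : Lprime) :
    resPair (a : LaurentSeries ℂ) ((TL c d k : Lprime) : LaurentSeries ℂ)
      = resPair (c : LaurentSeries ℂ) (k : LaurentSeries ℂ)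
          * resPair (a : LaurentSeries ℂ) (d : LaurentSeries ℂ)
        + resPair (d : LaurentSeries ℂ) (k : LaurentSeries ℂ)
          * resPair (a : LaurentSeries ℂ) (c : LaurentSeries ℂ) := by
  rw [TL_coe, resPair_add_right, resPair_smul_right, resPair_smul_right]

lemma TL_symm (f g : Lprime) : TL f g = TL g f := by
  funext k
  simp only [TL]
  apply add_comm

lemma ALg_symm (f g : Lprime) : ALg f g = ALg g f := by
  unfold ALg
  rw [TL_symm]

lemma TL_add_k (f g x y : Lprime) : TL f g (x + y) = TL f g x + TL f g y := by
  apply Subtype.ext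
  simp only [TL_coe, Submodule.coe_add, resPair_add_right]
  module

lemma TL_smul_k (f g : Lprime) (c : ℂ) (x : Lprime) : TL f g (c • x) = c • TL f g x := by
  apply Subtype.ext
  simp only [TL_coe, Submodule.coe_smul, resPair_smul_right]
  module

lemma TL_zero_k (f g : Lprime) : TL f g 0 = 0 := by
  apply Subtype.ext
  rw [TL_coe]
  rw [ZeroMemClass.coe_zero, resPair_zero_right, resPair_zero_right]
  module

/-- the key symplectic bracket identity. -/
lemma TL_bracket (a b c d k : Lprime) :
    TL a b (TL c d k) - TL c d (TL a b k) =
      resPair (a : LaurentSeries ℂ) (d : LaurentSeries ℂ) • TL b c k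
      + resPair (b : LaurentSeries ℂ) (d : LaurentSeries ℂ) • TL a c k
      + resPair (a : LaurentSeries ℂ) (c : LaurentSeries ℂ) • TL b d k
      + resPair (b : LaurentSeries ℂ) (c : LaurentSeries ℂ) • TL a d k := by
  apply Subtype.ext
  have hca := resPair_antisymmL a c
  have hcb := resPair_antisymmL b c
  have hda := resPair_antisymmL a d
  have hdb := resPair_antisymmL b d
  simp only [AddSubgroupClass.coe_sub, Submodule.coe_add, Submodule.coe_smul,
    TL_coe, resPair_TL, resPair_add_right, resPair_smul_right]
  rw [hca, hcb, hda, hdb]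
  module

lemma ALg_bracket (a b c d : Lprime) :
    (fun x => ALg a b (ALg c d x) - ALg c d (ALg a b x)) =
      resPair (a : LaurentSeries ℂ) (d : LaurentSeries ℂ) • ALg b c
      + resPair (b : LaurentSeries ℂ) (d : LaurentSeries ℂ) • ALg a c
      + resPair (a : LaurentSeries ℂ) (c : LaurentSeries ℂ) • ALg b d
      + resPair (b : LaurentSeries ℂ) (c : LaurentSeries ℂ) • ALg a d := by
  funext x
  simp only [ALg, Pi.add_apply, Pi.smul_apply, Prod.smul_mk, Prod.mk_add_mk, Prod.mk_sub_mk,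
    smul_zero, add_zero, sub_zero]
  exact Prod.ext (TL_bracket a b c d x.1) (by simp)

lemma AB_bracket (f g h : Lprime) :
    (fun x => ALg f g (BLg h x) - BLg h (ALg f g x)) = BLg (TL f g h) := by
  funext x
  refine Prod.ext ?_ ?_
  · show TL f g (x.2 • h) - (0 : ℂ) • h = x.2 • TL f g h
    rw [TL_smul_k]
    module
  · show (0 : ℂ) - 0 = 0
    exact sub_zero 0

lemma BB_bracket (h h' : Lprime) :
    (fun x => BLg h (BLg h' x) - BLg h' (BLg h x)) = (0 : Lprime × ℂ → Lprime × ℂ) := by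
  funext x
  refine Prod.ext ?_ ?_
  · show (0 : ℂ) • h - (0 : ℂ) • h' = 0
    module
  · show (0 : ℂ) - 0 = 0
    ring

lemma BLg_index_add (a b : Lprime) : BLg (a + b) = BLg a + BLg b := by
  funext x
  simp [BLg, smul_add, Prod.ext_iff]

lemma BLg_index_smul (c : ℂ) (a : Lprime) : BLg (c • a) = c • BLg a := by
  funext x
  show ((x.2 • (c • a), 0) : Lprime × ℂ) = c • (x.2 • a, (0 : ℂ))
  rw [Prod.smul_mk, smul_zero, smul_comm]

lemma ALg_mem (f g : Lprime) : ALg f g ∈ gFrak :=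
  Submodule.subset_span (Or.inl ⟨f, g, rfl⟩)

lemma BLg_mem (h : Lprime) : BLg h ∈ gFrak :=
  Submodule.subset_span (Or.inr ⟨h, rfl⟩)

/-- every generator is an additive, homogeneous map. -/
lemma gen_props (B : Lprime × ℂ → Lprime × ℂ)
    (hB : B ∈ ({A | ∃ f g : Lprime, A = ALg f g} ∪ {A | ∃ h : Lprime, A = BLg h} :
      Set (Lprime × ℂ → Lprime × ℂ))) :
    (∀ x y, B (x + y) = B x + B y) ∧ (∀ (c : ℂ) x, B (c • x) = c • B x) := by
  rcases hB with ⟨f, g, rfl⟩ | ⟨h, rfl⟩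
  · constructor
    · intro x y
      simp only [ALg]
      refine Prod.ext ?_ (by simp)
      show TL f g (x.1 + y.1) = TL f g x.1 + TL f g y.1
      exact TL_add_k f g x.1 y.1
    · intro c x
      simp only [ALg]
      refine Prod.ext ?_ (by simp)
      show TL f g (c • x.1) = c • TL f g x.1
      exact TL_smul_k f g c x.1
  · constructor
    · intro x y
      simp only [BLg]
      refine Prod.ext ?_ (by simp)
      show (x.2 + y.2) • h = x.2 • h + y.2 • h
      exact add_smul _ _ _
    · intro c x
      simp only [BLg]
      refine Prod.ext ?_ (by simp)
      show (c * x.2) • h = c • (x.2 • h)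
      exact mul_smul _ _ _

/-- every element of `gFrak` is an additive, homogeneous map. -/
lemma gFrak_props (A : Lprime × ℂ → Lprime × ℂ) (hA : A ∈ gFrak) :
    (∀ x y, A (x + y) = A x + A y) ∧ (∀ (c : ℂ) x, A (c • x) = c • A x) := by
  induction hA using Submodule.span_induction with
  | mem B hB => exact gen_props B hB
  | zero => exact ⟨fun x y => by simp, fun c x => by simp⟩
  | add B C _ _ hB hC =>
    refine ⟨fun x y => ?_, fun c x => ?_⟩
    · rw [Pi.add_apply, Pi.add_apply, Pi.add_apply, hB.1 x y, hC.1 x y]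
      abel
    · rw [Pi.add_apply, Pi.add_apply, hB.2 c x, hC.2 c x, smul_add]
  | smul a B _ hB =>
    refine ⟨fun x y => ?_, fun c x => ?_⟩
    · rw [Pi.smul_apply, Pi.smul_apply, Pi.smul_apply, hB.1 x y, smul_add]
    · rw [Pi.smul_apply, Pi.smul_apply, hB.2 c x, smul_comm]

lemma gFrak_zero_apply (A : Lprime × ℂ → Lprime × ℂ) (hA : A ∈ gFrak) : A 0 = 0 := by
  have h := (gFrak_props A hA).2 0 0
  rwa [zero_smul, zero_smul] at h

/-- Part 1: closure under commutator. -/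
lemma gFrak_closed : ∀ A ∈ gFrak, ∀ B ∈ gFrak,
    (fun x => A (B x) - B (A x)) ∈ gFrak := by
  -- first: B a generator
  have base : ∀ B ∈ ({A | ∃ f g : Lprime, A = ALg f g} ∪ {A | ∃ h : Lprime, A = BLg h} :
      Set (Lprime × ℂ → Lprime × ℂ)), ∀ A ∈ gFrak,
      (fun x => A (B x) - B (A x)) ∈ gFrak := by
    intro B hBgen A hA
    induction hA using Submodule.span_induction with
    | mem C hC =>
      rcases hC with ⟨f, g, rfl⟩ | ⟨h, rfl⟩
      · rcases hBgen with ⟨f', g', rfl⟩ | ⟨h', rfl⟩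
        · rw [ALg_bracket f g f' g']
          exact Submodule.add_mem _ (Submodule.add_mem _ (Submodule.add_mem _
            (Submodule.smul_mem _ _ (ALg_mem _ _)) (Submodule.smul_mem _ _ (ALg_mem _ _)))
            (Submodule.smul_mem _ _ (ALg_mem _ _))) (Submodule.smul_mem _ _ (ALg_mem _ _))
        · rw [AB_bracket f g h']
          exact BLg_mem _
      · rcases hBgen with ⟨f', g', rfl⟩ | ⟨h', rfl⟩
        · have : (fun x => BLg h (ALg f' g' x) - ALg f' g' (BLg h x)) =
              (-1 : ℂ) • (fun x => ALg f' g' (BLg h x) - BLg h (ALg f' g' x)) := by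
            funext x
            show BLg h (ALg f' g' x) - ALg f' g' (BLg h x)
              = (-1 : ℂ) • (ALg f' g' (BLg h x) - BLg h (ALg f' g' x))
            module
          rw [this, AB_bracket f' g' h]
          exact Submodule.smul_mem _ _ (BLg_mem _)
        · rw [BB_bracket h h']
          exact Submodule.zero_mem _
    | zero =>
      have h0 : B 0 = 0 := by
        have := (gen_props B hBgen).2 0 0
        rwa [zero_smul, zero_smul] at this
      have : (fun x => (0 : Lprime × ℂ → Lprime × ℂ) (B x)
          - B ((0 : Lprime × ℂ → Lprime × ℂ) x)) = 0 := by
        funext x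
        show (0 : Lprime × ℂ) - B 0 = 0
        rw [h0]
        exact sub_zero (0 : Lprime × ℂ)
      rw [this]
      exact Submodule.zero_mem _
    | add C D hCm hDm hC hD =>
      have : (fun x => (C + D) (B x) - B ((C + D) x)) =
          (fun x => C (B x) - B (C x)) + (fun x => D (B x) - B (D x)) := by
        funext x
        show C (B x) + D (B x) - B (C x + D x) = C (B x) - B (C x) + (D (B x) - B (D x))
        rw [(gen_props B hBgen).1 (C x) (D x)]
        abel
      rw [this]
      exact Submodule.add_mem _ hC hD
    | smul a C hCm hC =>
      have : (fun x => (a • C) (B x) - B ((a • C) x)) =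
          a • (fun x => C (B x) - B (C x)) := by
        funext x
        show a • C (B x) - B (a • C x) = a • (C (B x) - B (C x))
        rw [(gen_props B hBgen).2 a (C x)]
        module
      rw [this]
      exact Submodule.smul_mem _ _ hC
  intro A hA B hB
  induction hB using Submodule.span_induction with
  | mem C hC => exact base C hC A hA
  | zero =>
    have : (fun x => A ((0 : Lprime × ℂ → Lprime × ℂ) x)
        - (0 : Lprime × ℂ → Lprime × ℂ) (A x)) = 0 := by
      funext x
      show A 0 - (0 : Lprime × ℂ) = 0
      rw [gFrak_zero_apply A hA]
      exact sub_zero (0 : Lprime × ℂ)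
    rw [this]
    exact Submodule.zero_mem _
  | add C D hCm hDm hC hD =>
    have : (fun x => A ((C + D) x) - (C + D) (A x)) =
        (fun x => A (C x) - C (A x)) + (fun x => A (D x) - D (A x)) := by
      funext x
      show A (C x + D x) - (C (A x) + D (A x)) = A (C x) - C (A x) + (A (D x) - D (A x))
      rw [(gFrak_props A hA).1 (C x) (D x)]
      abel
    rw [this]
    exact Submodule.add_mem _ hC hD
  | smul a C hCm hC =>
    have : (fun x => A ((a • C) x) - (a • C) (A x)) =
        a • (fun x => A (C x) - C (A x)) := by
      funext x
      show A (a • C x) - a • C (A x) = a • (A (C x) - C (A x))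
      rw [(gFrak_props A hA).2 a (C x)]
      module
    rw [this]
    exact Submodule.smul_mem _ _ hC

/-! ### Perfectness -/

/-- The span of commutators. -/
noncomputable def Kspan : Submodule ℂ (Lprime × ℂ → Lprime × ℂ) :=
  Submodule.span ℂ
    {X : Lprime × ℂ → Lprime × ℂ | ∃ A ∈ gFrak, ∃ B ∈ gFrak,
      X = fun x => A (B x) - B (A x)}

lemma comm_mem_K (A : Lprime × ℂ → Lprime × ℂ) (hA : A ∈ gFrak)
    (B : Lprime × ℂ → Lprime × ℂ) (hB : B ∈ gFrak) :
    (fun x => A (B x) - B (A x)) ∈ Kspan :=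
  Submodule.subset_span ⟨A, hA, B, hB, rfl⟩

lemma BLg_tm_mem_K : BLg tm ∈ Kspan := by
  have h1 := comm_mem_K (ALg tm tm) (ALg_mem _ _) (BLg tp) (BLg_mem _)
  rw [AB_bracket tm tm tp] at h1
  have e1 : TL tm tm tp = (-1 : ℂ) • tm + (-1 : ℂ) • tm := by
    show resPair (tm : LaurentSeries ℂ) (tp : LaurentSeries ℂ) • tm
        + resPair (tm : LaurentSeries ℂ) (tp : LaurentSeries ℂ) • tm
      = (-1 : ℂ) • tm + (-1 : ℂ) • tm
    rw [v_tmtp]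
  rw [e1, BLg_index_add, BLg_index_smul] at h1
  have e2 : BLg tm = (-2 : ℂ)⁻¹ • ((-1 : ℂ) • BLg tm + (-1 : ℂ) • BLg tm) := by
    funext x
    show BLg tm x = (-2 : ℂ)⁻¹ • ((-1 : ℂ) • BLg tm x + (-1 : ℂ) • BLg tm x)
    module
  rw [e2]
  exact Submodule.smul_mem _ _ h1

lemma BLg_mem_K (h : Lprime) : BLg h ∈ Kspan := by
  have h1 := comm_mem_K (ALg tm h) (ALg_mem _ _) (BLg tp) (BLg_mem _)
  rw [AB_bracket tm h tp] at h1
  have e1 : TL tm h tp = (-1 : ℂ) • h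
      + (-((h : LaurentSeries ℂ).coeff (-1))) • tm := by
    show resPair (tm : LaurentSeries ℂ) (tp : LaurentSeries ℂ) • h
        + resPair (h : LaurentSeries ℂ) (tp : LaurentSeries ℂ) • tm
      = (-1 : ℂ) • h + (-((h : LaurentSeries ℂ).coeff (-1))) • tm
    rw [v_tmtp, resPair_tp]
  rw [e1, BLg_index_add, BLg_index_smul, BLg_index_smul] at h1
  have e2 : BLg h = (-1 : ℂ) • ((-1 : ℂ) • BLg h
      + (-((h : LaurentSeries ℂ).coeff (-1))) • BLg tm)
      + (-((h : LaurentSeries ℂ).coeff (-1))) • BLg tm := by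
    funext x
    show BLg h x = (-1 : ℂ) • ((-1 : ℂ) • BLg h x
        + (-((h : LaurentSeries ℂ).coeff (-1))) • BLg tm x)
      + (-((h : LaurentSeries ℂ).coeff (-1))) • BLg tm x
    module
  rw [e2]
  exact Submodule.add_mem _ (Submodule.smul_mem _ _ h1)
    (Submodule.smul_mem _ _ BLg_tm_mem_K)

lemma ALg_tmtp_mem_K : ALg tm tp ∈ Kspan := by
  have h1 := comm_mem_K (ALg tm tm) (ALg_mem _ _) (ALg tp tp) (ALg_mem _ _)
  rw [ALg_bracket tm tm tp tp, v_tmtp] at h1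
  have e2 : ALg tm tp = (-4 : ℂ)⁻¹ • ((-1 : ℂ) • ALg tm tp + (-1 : ℂ) • ALg tm tp
      + (-1 : ℂ) • ALg tm tp + (-1 : ℂ) • ALg tm tp) := by
    funext x
    show ALg tm tp x = (-4 : ℂ)⁻¹ • ((-1 : ℂ) • ALg tm tp x + (-1 : ℂ) • ALg tm tp x
      + (-1 : ℂ) • ALg tm tp x + (-1 : ℂ) • ALg tm tp x)
    module
  rw [e2]
  exact Submodule.smul_mem _ _ h1

lemma ALg_f_tp_mem_K (f : Lprime) : ALg f tp ∈ Kspan := by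
  have h1 := comm_mem_K (ALg f tm) (ALg_mem _ _) (ALg tp tp) (ALg_mem _ _)
  rw [ALg_bracket f tm tp tp, v_tmtp] at h1
  have e2 : ALg f tp = (-2 : ℂ)⁻¹ •
        (resPair (f : LaurentSeries ℂ) (tp : LaurentSeries ℂ) • ALg tm tp
          + (-1 : ℂ) • ALg f tp
          + resPair (f : LaurentSeries ℂ) (tp : LaurentSeries ℂ) • ALg tm tp
          + (-1 : ℂ) • ALg f tp)
      + resPair (f : LaurentSeries ℂ) (tp : LaurentSeries ℂ) • ALg tm tp := by
    funext x
    show ALg f tp x = (-2 : ℂ)⁻¹ •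
        (resPair (f : LaurentSeries ℂ) (tp : LaurentSeries ℂ) • ALg tm tp x
          + (-1 : ℂ) • ALg f tp x
          + resPair (f : LaurentSeries ℂ) (tp : LaurentSeries ℂ) • ALg tm tp x
          + (-1 : ℂ) • ALg f tp x)
      + resPair (f : LaurentSeries ℂ) (tp : LaurentSeries ℂ) • ALg tm tp x
    module
  rw [e2]
  exact Submodule.add_mem _ (Submodule.smul_mem _ _ h1)
    (Submodule.smul_mem _ _ ALg_tmtp_mem_K)

lemma ALg_g_tm_mem_K (g : Lprime) : ALg g tm ∈ Kspan := by
  have h1 := comm_mem_K (ALg g tp) (ALg_mem _ _) (ALg tm tm) (ALg_mem _ _)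
  rw [ALg_bracket g tp tm tm, v_tptm, ALg_symm tp tm] at h1
  have e2 : ALg g tm = (2 : ℂ)⁻¹ •
        (resPair (g : LaurentSeries ℂ) (tm : LaurentSeries ℂ) • ALg tm tp
          + (1 : ℂ) • ALg g tm
          + resPair (g : LaurentSeries ℂ) (tm : LaurentSeries ℂ) • ALg tm tp
          + (1 : ℂ) • ALg g tm)
      + (-(resPair (g : LaurentSeries ℂ) (tm : LaurentSeries ℂ))) • ALg tm tp := by
    funext x
    show ALg g tm x = (2 : ℂ)⁻¹ •
        (resPair (g : LaurentSeries ℂ) (tm : LaurentSeries ℂ) • ALg tm tp x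
          + (1 : ℂ) • ALg g tm x
          + resPair (g : LaurentSeries ℂ) (tm : LaurentSeries ℂ) • ALg tm tp x
          + (1 : ℂ) • ALg g tm x)
      + (-(resPair (g : LaurentSeries ℂ) (tm : LaurentSeries ℂ))) • ALg tm tp x
    module
  rw [e2]
  exact Submodule.add_mem _ (Submodule.smul_mem _ _ h1)
    (Submodule.smul_mem _ _ ALg_tmtp_mem_K)

lemma ALg_mem_K (f g : Lprime) : ALg f g ∈ Kspan := by
  have h1 := comm_mem_K (ALg f tm) (ALg_mem _ _) (ALg g tp) (ALg_mem _ _)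
  rw [ALg_bracket f tm g tp, v_tmtp, ALg_symm tm g] at h1
  have e2 : ALg f g = (-1 : ℂ) •
        (resPair (f : LaurentSeries ℂ) (tp : LaurentSeries ℂ) • ALg g tm
          + (-1 : ℂ) • ALg f g
          + resPair (f : LaurentSeries ℂ) (g : LaurentSeries ℂ) • ALg tm tp
          + resPair (tm : LaurentSeries ℂ) (g : LaurentSeries ℂ) • ALg f tp)
      + resPair (f : LaurentSeries ℂ) (tp : LaurentSeries ℂ) • ALg g tm
      + resPair (f : LaurentSeries ℂ) (g : LaurentSeries ℂ) • ALg tm tp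
      + resPair (tm : LaurentSeries ℂ) (g : LaurentSeries ℂ) • ALg f tp := by
    funext x
    show ALg f g x = (-1 : ℂ) •
        (resPair (f : LaurentSeries ℂ) (tp : LaurentSeries ℂ) • ALg g tm x
          + (-1 : ℂ) • ALg f g x
          + resPair (f : LaurentSeries ℂ) (g : LaurentSeries ℂ) • ALg tm tp x
          + resPair (tm : LaurentSeries ℂ) (g : LaurentSeries ℂ) • ALg f tp x)
      + resPair (f : LaurentSeries ℂ) (tp : LaurentSeries ℂ) • ALg g tm x
      + resPair (f : LaurentSeries ℂ) (g : LaurentSeries ℂ) • ALg tm tp x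
      + resPair (tm : LaurentSeries ℂ) (g : LaurentSeries ℂ) • ALg f tp x
    module
  rw [e2]
  exact Submodule.add_mem _ (Submodule.add_mem _ (Submodule.add_mem _
    (Submodule.smul_mem _ _ h1) (Submodule.smul_mem _ _ (ALg_g_tm_mem_K g)))
    (Submodule.smul_mem _ _ ALg_tmtp_mem_K))
    (Submodule.smul_mem _ _ (ALg_f_tp_mem_K f))


end Aux

/-- the span `𝔤` of the operators `A_{f,g}` and `B_h` on `L' ⊕ ℂ` is
closed under the commutator bracket and is perfect: `[𝔤, 𝔤] = 𝔤`. -/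
theorem gFrak_closed_and_perfect :
    (∀ A ∈ gFrak, ∀ B ∈ gFrak, (fun x => A (B x) - B (A x)) ∈ gFrak) ∧
    gFrak = Submodule.span ℂ
      {X : Lprime × ℂ → Lprime × ℂ | ∃ A ∈ gFrak, ∃ B ∈ gFrak,
        X = fun x => A (B x) - B (A x)} := by
  refine ⟨gFrak_closed, le_antisymm ?_ ?_⟩
  · have : Submodule.span ℂ
        ({A | ∃ f g : Lprime, A = ALg f g} ∪ {A | ∃ h : Lprime, A = BLg h}) ≤ Kspan := by
      apply Submodule.span_le.mpr
      rintro X (⟨f, g, rfl⟩ | ⟨h, rfl⟩)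
      · exact ALg_mem_K f g
      · exact BLg_mem_K h
    exact this
  · apply Submodule.span_le.mpr
    rintro X ⟨A, hA, B, hB, rfl⟩
    exact gFrak_closed A hA B hB
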